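/- arXiv:1501.04989 — 2 statements merged into one kernel-verified Lean document; each statement's English description precedes it below -/
import Mathlib

section
/- Let f : [−1,1] → ℝ be continuously differentiable on [−1,1], twice differentiable on (−1,1), with (1−t²)·f''(t) − 4t·f'(t) = 0 for all t ∈ (−1,1). Then f is constant. -/
theorem stmt_5 (f f' f'' : ℝ → ℝ)
    (hf : ∀ t ∈ Set.Icc (-1:ℝ) 1, HasDerivAt f (f' t) t)
    (hf'cont : ContinuousOn f' (Set.Icc (-1:ℝ) 1))
    (hf' : ∀ t ∈ Set.Ioo (-1:ℝ) 1, HasDerivAt f' (f'' t) t)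
    (hode : ∀ t ∈ Set.Ioo (-1:ℝ) 1, (1 - t ^ 2) * f'' t - 4 * t * f' t = 0) :
    ∀ s ∈ Set.Icc (-1:ℝ) 1, ∀ t ∈ Set.Icc (-1:ℝ) 1, f s = f t := by
  set g : ℝ → ℝ := fun t => (1 - t ^ 2) ^ 2 * f' t with hg_def
  have hgderiv : ∀ t ∈ Set.Ioo (-1:ℝ) 1, HasDerivAt g 0 t := by
    intro t ht
    have ha : HasDerivAt (fun t : ℝ => 1 - t ^ 2) (-(2 * t)) t := by
      simpa using (hasDerivAt_pow 2 t).const_sub 1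
    have hb := (ha.pow 2).mul (hf' t ht)
    have h := hode t ht
    refine HasDerivAt.congr_deriv (f := g) hb ?_
    push_cast [Pi.pow_apply]
    linear_combination (1 - t ^ 2) * h
  have hgcont : ContinuousOn g (Set.Icc (-1:ℝ) 1) := by
    exact (Continuous.continuousOn (by continuity)).mul hf'cont
  -- g is constant on Icc, equal to g 1 = 0
  have hgconst : ∀ x ∈ Set.Icc (-1:ℝ) 1, ∀ y ∈ Set.Icc (-1:ℝ) 1, x < y → g x = g y := by
    intro x hx y hy hxy
    obtain ⟨c, hc, hceq⟩ := exists_hasDerivAt_eq_slope g (fun _ => 0) hxy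
      (hgcont.mono (Set.Icc_subset_Icc hx.1 hy.2))
      (fun z hz => hgderiv z ⟨lt_of_le_of_lt hx.1 hz.1, lt_of_lt_of_le hz.2 hy.2⟩)
    have hne : y - x ≠ 0 := sub_ne_zero.mpr hxy.ne'
    have h2 : (g y - g x) / (y - x) = 0 := by simpa using hceq.symm
    have h3 := (div_eq_iff hne).mp h2
    rw [zero_mul] at h3
    linarith
  have hg1 : g 1 = 0 := by simp [hg_def]
  have hgzero : ∀ x ∈ Set.Icc (-1:ℝ) 1, g x = 0 := by
    intro x hx
    rcases eq_or_lt_of_le hx.2 with h | h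
    · rw [h]; exact hg1
    · rw [hgconst x hx 1 (by norm_num) h]; exact hg1
  have hf'zero : ∀ t ∈ Set.Ioo (-1:ℝ) 1, f' t = 0 := by
    intro t ht
    have h := hgzero t (Set.Ioo_subset_Icc_self ht)
    have hne : (1 - t ^ 2) ^ 2 ≠ 0 := by
      have h1 : 0 < 1 - t ^ 2 := by nlinarith [ht.1, ht.2]
      positivity
    simpa [hg_def, hne] using h
  have hfcont : ContinuousOn f (Set.Icc (-1:ℝ) 1) :=
    fun x hx => (hf x hx).continuousAt.continuousWithinAt
  have key : ∀ x ∈ Set.Icc (-1:ℝ) 1, ∀ y ∈ Set.Icc (-1:ℝ) 1, x < y → f x = f y := by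
    intro x hx y hy hxy
    obtain ⟨c, hc, hceq⟩ := exists_hasDerivAt_eq_slope f f' hxy
      (hfcont.mono (Set.Icc_subset_Icc hx.1 hy.2))
      (fun z hz => hf z ⟨le_trans hx.1 hz.1.le, le_trans hz.2.le hy.2⟩)
    have hz : f' c = 0 := hf'zero c ⟨lt_of_le_of_lt hx.1 hc.1, lt_of_lt_of_le hc.2 hy.2⟩
    rw [hz] at hceq
    have hne : y - x ≠ 0 := sub_ne_zero.mpr hxy.ne'
    have h2 : (f y - f x) / (y - x) = 0 := hceq.symm
    have h3 := (div_eq_iff hne).mp h2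
    rw [zero_mul] at h3
    linarith
  intro s hs t ht
  rcases lt_trichotomy s t with h | h | h
  · exact key s hs t ht h
  · rw [h]
  · exact (key t ht s hs h).symm
end

section
/- The function u(x, y, t) = log(1 − t²) − 2·log(y), defined on the region {(x,y,t) ∈ ℝ³ : y > 0, −1 < t < 1}, satisfies the SU(∞)-Toda (Boyer–Finley) equation u_xx + u_yy + (e^u)_tt = 0. -/
/-- The canonical model `u(x,y,t) = log(1−t²) − 2 log y` solves the SU(∞)-Toda
(Boyer–Finley) equation `u_xx + u_yy + (e^u)_tt = 0` on `{y > 0, −1 < t < 1}`. -/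
theorem stmt_8 (u : ℝ → ℝ → ℝ → ℝ)
    (hu : ∀ x y t : ℝ, u x y t = Real.log (1 - t ^ 2) - 2 * Real.log y) :
    ∀ x y t : ℝ, 0 < y → -1 < t → t < 1 →
      deriv (deriv (fun x' => u x' y t)) x
      + deriv (deriv (fun y' => u x y' t)) y
      + deriv (deriv (fun t' => Real.exp (u x y t'))) t = 0 := by
  intro x y t hy ht1 ht2
  -- x part
  have hx : deriv (deriv (fun x' => u x' y t)) x = 0 := by
    have hfx : (fun x' => u x' y t) = fun _ => Real.log (1 - t ^ 2) - 2 * Real.log y :=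
      funext fun x' => hu x' y t
    rw [hfx]
    simp
  -- y part
  have hfy : (fun y' => u x y' t) = fun y' => Real.log (1 - t ^ 2) - 2 * Real.log y' :=
    funext fun y' => hu x y' t
  have hd1 : deriv (fun y' => u x y' t) =ᶠ[nhds y] fun y' => -2 * y'⁻¹ := by
    filter_upwards [eventually_gt_nhds hy] with z hz
    have h := ((Real.hasDerivAt_log hz.ne').const_mul (2 : ℝ)).const_sub
        (Real.log (1 - t ^ 2))
    rw [hfy, h.deriv]
    ring
  have hy2 : deriv (deriv (fun y' => u x y' t)) y = 2 / y ^ 2 := by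
    rw [hd1.deriv_eq]
    have h := (hasDerivAt_inv hy.ne').const_mul (-2 : ℝ)
    rw [h.deriv]
    field_simp
  -- t part
  have hEq : (fun t' => Real.exp (u x y t')) =ᶠ[nhds t]
      fun t' => (1 - t' ^ 2) / y ^ 2 := by
    filter_upwards [eventually_gt_nhds ht1, eventually_lt_nhds ht2] with z hz1 hz2
    have hpos : (0 : ℝ) < 1 - z ^ 2 := by nlinarith
    rw [hu, Real.exp_sub, Real.exp_log hpos]
    congr 1
    rw [show (2:ℝ) * Real.log y = (2:ℕ) * Real.log y by norm_num, Real.exp_nat_mul,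
      Real.exp_log hy]
  have hg1 : deriv (fun t' : ℝ => (1 - t' ^ 2) / y ^ 2) = fun t' => -(2 * t') / y ^ 2 := by
    funext z
    have h := ((hasDerivAt_pow 2 z).const_sub (1 : ℝ)).div_const (y ^ 2)
    rw [h.deriv]
    ring_nf
  have ht : deriv (deriv (fun t' => Real.exp (u x y t'))) t = -2 / y ^ 2 := by
    rw [hEq.deriv.deriv_eq, hg1]
    have h := (((hasDerivAt_id t).const_mul (2 : ℝ)).neg).div_const (y ^ 2)
    simp only [id_eq, Pi.neg_apply] at h
    rw [h.deriv]
    ring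
  rw [hx, hy2, ht]
  ring
end
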